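/- Let S ⊂ ℝⁿ₊ be a compact convex lower set with 0 ∈ S, let μ be a distance function on ℂⁿ, let u : ℂⁿ → [−∞,∞) satisfy u ≤ H_S + c_u for a constant c_u ∈ ℝ, and let δ ∈ (0, σ_S^{-1} e^{c_u} r_μ), where σ_S = φ_S(1,…,1) and r_μ = inf_{|z|=1} μ(z). Then R^a_{μ,δ}u(z) = −log inf_{w∈ℂⁿ} { e^{−u(w)} + δ^{−1} μ(z−w) } satisfies R^a_{μ,δ}u(z) ≤ H_S(z) + c_u for all z ∈ ℂⁿ. -/

import Mathlib

open MeasureTheory Filter Topology Set Pointwise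
open scoped ENNReal NNReal Classical

noncomputable section

/-- The positive orthant `ℝⁿ₊ = [0,∞)ⁿ`. -/
def posOrthant (n : ℕ) : Set (Fin n → ℝ) := {x | ∀ i, 0 ≤ x i}

/-- The supporting function `φ_S(ξ) = sup_{x ∈ S} ⟨x, ξ⟩` of a set `S ⊆ ℝⁿ`. -/
def suppFn {n : ℕ} (S : Set (Fin n → ℝ)) (ξ : Fin n → ℝ) : ℝ :=
  sSup ((fun x => ∑ i, x i * ξ i) '' S)

/-- `σ_S = φ_S(1,…,1)`. -/
def sigmaS {n : ℕ} (S : Set (Fin n → ℝ)) : ℝ := suppFn S 1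

/-- `ℂ*ⁿ = (ℂ ∖ {0})ⁿ`. -/
def torusComp (n : ℕ) : Set (Fin n → ℂ) := {z | ∀ i, z i ≠ 0}

/-- The logarithmic supporting function `H_S`:
`H_S(z) = φ_S(log|z₁|,…,log|zₙ|)` on `ℂ*ⁿ`, and the limsup over `ℂ*ⁿ ∋ w → z` elsewhere. -/
def HS {n : ℕ} (S : Set (Fin n → ℝ)) (z : Fin n → ℂ) : ℝ :=
  if z ∈ torusComp n then suppFn S (fun i => Real.log ‖z i‖)
  else Filter.limsup (fun w => suppFn S (fun i => Real.log ‖w i‖)) (𝓝[torusComp n] z)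

/-- The positive part of an extended real number, as an element of `ℝ≥0∞`. -/
def erealPos (x : EReal) : ℝ≥0∞ := if x = ⊤ then ⊤ else ENNReal.ofReal x.toReal

/-- The circle integral `∫₀^{2π} u(a + r e^{iθ} b) dθ` for an `EReal`-valued `u`,
defined as the (upper) integral of the positive part minus that of the negative part. -/
def circInt {n : ℕ} (u : (Fin n → ℂ) → EReal) (a b : Fin n → ℂ) (r : ℝ) : EReal :=
  ((∫⁻ θ in Set.Ioc (0 : ℝ) (2 * Real.pi),
      erealPos (u (a + ((r : ℂ) * Complex.exp ((θ : ℂ) * Complex.I)) • b))) : EReal) -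
  ((∫⁻ θ in Set.Ioc (0 : ℝ) (2 * Real.pi),
      erealPos (-u (a + ((r : ℂ) * Complex.exp ((θ : ℂ) * Complex.I)) • b))) : EReal)

/-- `u : Ω → [−∞,∞)` is plurisubharmonic on an open `Ω ⊆ ℂⁿ`: upper semicontinuous on `Ω`,
`< +∞` on `Ω`, not identically `−∞` on any connected component of `Ω`, and satisfying the
submean inequality `2π · u(a) ≤ ∫₀^{2π} u(a + r e^{iθ} b) dθ` over closed discs
`{a + ζ b : |ζ| ≤ r} ⊆ Ω` in complex lines. -/
def PshOn {n : ℕ} (Ω : Set (Fin n → ℂ)) (u : (Fin n → ℂ) → EReal) : Prop :=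
  UpperSemicontinuousOn u Ω ∧
  (∀ z ∈ Ω, u z ≠ ⊤) ∧
  (∀ z ∈ Ω, ∃ w ∈ connectedComponentIn Ω z, u w ≠ ⊥) ∧
  ∀ a b : Fin n → ℂ, ∀ r : ℝ, 0 < r →
    (∀ ζ : ℂ, ‖ζ‖ ≤ r → a + ζ • b ∈ Ω) →
    ((2 * Real.pi : ℝ) : EReal) * u a ≤ circInt u a b r

/-- The Lelong class `L^S(ℂⁿ)`: plurisubharmonic functions on `ℂⁿ` with `u ≤ H_S + c_u`. -/
def LelongClass {n : ℕ} (S : Set (Fin n → ℝ)) (u : (Fin n → ℂ) → EReal) : Prop :=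
  PshOn Set.univ u ∧ ∃ c : ℝ, ∀ z, u z ≤ ((HS S z + c : ℝ) : EReal)

/-- The Euclidean norm on `ℂⁿ`. -/
def eucNorm {n : ℕ} (z : Fin n → ℂ) : ℝ := Real.sqrt (∑ i, ‖z i‖ ^ 2)

/-- A distance function on `ℂⁿ`: continuous, vanishing exactly at `0`, and absolutely
homogeneous with respect to complex scalars. -/
def IsDistFn {n : ℕ} (μ : (Fin n → ℂ) → ℝ) : Prop :=
  Continuous μ ∧ (∀ z, 0 ≤ μ z) ∧ (∀ z, μ z = 0 ↔ z = 0) ∧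
    ∀ (t : ℂ) (z : Fin n → ℂ), μ (t • z) = ‖t‖ * μ z

/-- `r_μ = inf_{|z| = 1} μ(z)` (Euclidean unit sphere). -/
def rMu {n : ℕ} (μ : (Fin n → ℂ) → ℝ) : ℝ := sInf (μ '' {z | eucNorm z = 1})

/-- `S` is a lower set: `x ∈ S` implies `[0,x₁] × ⋯ × [0,xₙ] ⊆ S`. -/
def IsLowerIn {n : ℕ} (S : Set (Fin n → ℝ)) : Prop :=
  ∀ x ∈ S, ∀ y : Fin n → ℝ, (∀ i, 0 ≤ y i ∧ y i ≤ x i) → y ∈ S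

/-- The standard simplex `Σ = ch{0, e₁, …, eₙ}`. -/
def stdSimpl (n : ℕ) : Set (Fin n → ℝ) :=
  convexHull ℝ (insert 0 (Set.range fun i => Pi.single i 1))


/-- The exponential `e^x ∈ [0,∞]` of an extended real number. -/
def expE (x : EReal) : ℝ≥0∞ :=
  if x = ⊥ then 0 else if x = ⊤ then ⊤ else ENNReal.ofReal (Real.exp x.toReal)

/-- The logarithm `log t ∈ [−∞,∞]` of `t ∈ [0,∞]`. -/
def elog (t : ℝ≥0∞) : EReal :=
  if t = 0 then ⊥ else if t = ⊤ then ⊤ else ((Real.log t.toReal : ℝ) : EReal)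

/-- Siciak's infimal convolution for a general `u : ℂⁿ → [−∞,∞)`, with the infimum computed
in `[0,∞]`:
`R^a_{μ,δ} u(z) = −log inf_{w ∈ ℂⁿ} { e^{−u(w)} + δ⁻¹ μ(z − w) }`. -/
def RaGen {n : ℕ} (μ : (Fin n → ℂ) → ℝ) (δ : ℝ) (u : (Fin n → ℂ) → EReal)
    (z : Fin n → ℂ) : EReal :=
  -elog (⨅ w : Fin n → ℂ, expE (-u w) + ENNReal.ofReal (δ⁻¹ * μ (z - w)))


section Aux

variable {n : ℕ} {S : Set (Fin n → ℝ)}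

lemma suppFn_bdd (hScomp : IsCompact S) (ξ : Fin n → ℝ) :
    BddAbove ((fun x => ∑ i, x i * ξ i) '' S) :=
  (hScomp.image (by continuity)).bddAbove

lemma le_suppFn (hScomp : IsCompact S) {x : Fin n → ℝ} (hx : x ∈ S) (ξ : Fin n → ℝ) :
    ∑ i, x i * ξ i ≤ suppFn S ξ :=
  le_csSup (suppFn_bdd hScomp ξ) ⟨x, hx, rfl⟩

lemma suppFn_le (hS0 : (0 : Fin n → ℝ) ∈ S) {ξ : Fin n → ℝ} {M : ℝ}
    (h : ∀ x ∈ S, ∑ i, x i * ξ i ≤ M) : suppFn S ξ ≤ M :=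
  csSup_le ⟨_, ⟨0, hS0, rfl⟩⟩ (by rintro y ⟨x, hx, rfl⟩; exact h x hx)

lemma suppFn_nonneg (hScomp : IsCompact S) (hS0 : (0 : Fin n → ℝ) ∈ S) (ξ : Fin n → ℝ) :
    0 ≤ suppFn S ξ := by
  have := le_suppFn hScomp hS0 ξ
  simpa using this

lemma sum_le_sigma (hScomp : IsCompact S) {x : Fin n → ℝ} (hx : x ∈ S) :
    ∑ i, x i ≤ sigmaS S := by
  have := le_suppFn hScomp hx 1
  simpa [sigmaS] using this

lemma sigma_nonneg (hScomp : IsCompact S) (hS0 : (0 : Fin n → ℝ) ∈ S) : 0 ≤ sigmaS S :=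
  suppFn_nonneg hScomp hS0 1

lemma suppFn_lip (hSsub : ∀ x ∈ S, ∀ i, 0 ≤ x i) (hScomp : IsCompact S)
    (hS0 : (0 : Fin n → ℝ) ∈ S)
    {ξ η : Fin n → ℝ} {d : ℝ} (hd : 0 ≤ d) (h : ∀ i, ξ i ≤ η i + d) :
    suppFn S ξ ≤ suppFn S η + sigmaS S * d := by
  apply suppFn_le hS0
  intro x hx
  have h1 : ∑ i, x i * ξ i ≤ (∑ i, x i * η i) + (∑ i, x i) * d := by
    rw [Finset.sum_mul, ← Finset.sum_add_distrib]
    apply Finset.sum_le_sum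
    intro i _
    have := hSsub x hx i
    nlinarith [h i]
  have h2 : (∑ i, x i) * d ≤ sigmaS S * d :=
    mul_le_mul_of_nonneg_right (sum_le_sigma hScomp hx) hd
  have h3 := le_suppFn hScomp hx η
  linarith

lemma suppFn_pos_part (hSsub : ∀ x ∈ S, ∀ i, 0 ≤ x i) (hScomp : IsCompact S)
    (hS0 : (0 : Fin n → ℝ) ∈ S)
    (hSlow : ∀ x ∈ S, ∀ y : Fin n → ℝ, (∀ i, 0 ≤ y i ∧ y i ≤ x i) → y ∈ S)
    (ξ : Fin n → ℝ) : suppFn S ξ = suppFn S (fun i => max (ξ i) 0) := by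
  apply le_antisymm
  · apply suppFn_le hS0
    intro x hx
    have : ∑ i, x i * ξ i ≤ ∑ i, x i * max (ξ i) 0 := by
      apply Finset.sum_le_sum
      intro i _
      exact mul_le_mul_of_nonneg_left (le_max_left _ _) (hSsub x hx i)
    exact this.trans (le_suppFn hScomp hx _)
  · apply suppFn_le hS0
    intro x hx
    set y : Fin n → ℝ := fun i => if 0 ≤ ξ i then x i else 0 with hy
    have hyS : y ∈ S := by
      apply hSlow x hx
      intro i
      by_cases h : 0 ≤ ξ i <;> simp [hy, h, hSsub x hx i]
    have : ∑ i, x i * max (ξ i) 0 = ∑ i, y i * ξ i := by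
      apply Finset.sum_congr rfl
      intro i _
      by_cases h : 0 ≤ ξ i
      · simp [hy, h, max_eq_left h]
      · simp [hy, h, max_eq_right (le_of_not_ge h)]
    rw [this]
    exact le_suppFn hScomp hyS ξ

lemma log_max_eq {a : ℝ} (ha : 0 ≤ a) : Real.log (max a 1) = max (Real.log a) 0 := by
  rcases le_total a 1 with h | h
  · rw [max_eq_right h, Real.log_one, max_eq_right (Real.log_nonpos ha h)]
  · rw [max_eq_left h, max_eq_left (Real.log_nonneg h)]

/-- `H_S` expressed via `log⁺`. -/
def GG {n : ℕ} (S : Set (Fin n → ℝ)) (z : Fin n → ℂ) : ℝ :=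
  suppFn S (fun i => Real.log (max (‖z i‖) 1))

lemma GG_lipKey {z w : Fin n → ℂ} (i : Fin n) :
    Real.log (max (‖z i‖) 1) ≤ Real.log (max (‖w i‖) 1) + eucNorm (z - w) := by
  set a := ‖z i‖
  set b := ‖w i‖
  set A := max a 1
  set B := max b 1
  have hB1 : 1 ≤ B := le_max_right _ _
  have habs : |a - b| ≤ ‖z i - w i‖ :=
    abs_norm_sub_norm_le _ _
  have ht : ‖z i - w i‖ ≤ eucNorm (z - w) := by
    have h1 : ‖z i - w i‖ ^ 2 ≤ ∑ j, ‖(z - w) j‖ ^ 2 := by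
      have := Finset.single_le_sum (f := fun j => ‖(z - w) j‖ ^ 2)
        (fun j _ => sq_nonneg _) (Finset.mem_univ i)
      simpa using this
    calc ‖z i - w i‖ = Real.sqrt (‖z i - w i‖ ^ 2) :=
          (Real.sqrt_sq (norm_nonneg _)).symm
      _ ≤ eucNorm (z - w) := Real.sqrt_le_sqrt h1
  set t := eucNorm (z - w)
  have hab : a - b ≤ t := by
    have : a - b ≤ |a - b| := le_abs_self _
    linarith
  have hAB : A ≤ B + max (a - b) 0 := by
    have h1 : a ≤ b + max (a - b) 0 := by
      have := le_max_left (a - b) 0; linarith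
    have h2 : (1:ℝ) ≤ 1 + max (a - b) 0 := by
      have := le_max_right (a - b) 0; linarith
    calc A ≤ max (b + max (a - b) 0) (1 + max (a - b) 0) := max_le_max h1 h2
      _ = B + max (a - b) 0 := by rw [max_add_add_right]
  have hmt : max (a - b) 0 ≤ t := by
    have ht0 : 0 ≤ t := Real.sqrt_nonneg _
    exact max_le hab ht0
  rcases le_total A B with h | h
  · have := Real.log_le_log (lt_of_lt_of_le one_pos (le_max_right a 1)) h
    have ht0 : 0 ≤ t := Real.sqrt_nonneg _
    linarith
  · have hApos : 0 < A := lt_of_lt_of_le one_pos (le_max_right a 1)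
    have hBpos : 0 < B := lt_of_lt_of_le one_pos hB1
    have h1 : Real.log (A / B) ≤ A / B - 1 :=
      Real.log_le_sub_one_of_pos (div_pos hApos hBpos)
    have h2 : Real.log (A / B) = Real.log A - Real.log B :=
      Real.log_div (ne_of_gt hApos) (ne_of_gt hBpos)
    have h3 : A / B - 1 ≤ A - B := by
      rw [div_sub_one (ne_of_gt hBpos)]
      have : A - B ≤ (A - B) * B := by nlinarith
      calc (A - B) / B ≤ (A - B) * B / B := by apply div_le_div_of_nonneg_right <;> nlinarith
        _ = A - B := by field_simp
    have h4 : A - B ≤ t := by linarith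
    linarith

lemma HS_eq_GG (hSsub : ∀ x ∈ S, ∀ i, 0 ≤ x i) (hScomp : IsCompact S)
    (hS0 : (0 : Fin n → ℝ) ∈ S)
    (hSlow : ∀ x ∈ S, ∀ y : Fin n → ℝ, (∀ i, 0 ≤ y i ∧ y i ≤ x i) → y ∈ S)
    (z : Fin n → ℂ) : HS S z = GG S z := by
  have hagree : ∀ w : Fin n → ℂ,
      suppFn S (fun i => Real.log (‖w i‖)) = GG S w := by
    intro w
    rw [suppFn_pos_part hSsub hScomp hS0 hSlow]
    unfold GG
    congr 1
    funext i
    rw [log_max_eq (norm_nonneg _)]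
  by_cases hz : z ∈ torusComp n
  · rw [HS, if_pos hz, hagree]
  · rw [HS, if_neg hz]
    have hcl : z ∈ closure (torusComp n) := by
      apply mem_closure_of_tendsto (f := fun k : ℕ =>
        (fun i => if z i = 0 then ((1 / (k + 1) : ℝ) : ℂ) else z i)) (b := atTop)
      · rw [tendsto_pi_nhds]
        intro i
        by_cases h : z i = 0
        · have h1 : Filter.Tendsto (fun k : ℕ => (1 / (k + 1) : ℝ)) atTop (𝓝 0) :=
            tendsto_one_div_add_atTop_nhds_zero_nat
          have h2 : Filter.Tendsto (fun k : ℕ => ((1 / (k + 1) : ℝ) : ℂ)) atTop (𝓝 ((0:ℝ):ℂ)) :=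
            (Complex.continuous_ofReal.tendsto _).comp h1
          simp only [h, if_pos, Complex.ofReal_zero] at h2 ⊢
          exact h2
        · simp only [h, if_neg, ite_false]
          exact tendsto_const_nhds
      · filter_upwards with k
        intro i
        by_cases h : z i = 0
        · simp only [h, if_pos, ite_true]
          exact Complex.ofReal_ne_zero.mpr (by positivity)
        · simp [h]
    have hnb : (𝓝[torusComp n] z).NeBot := mem_closure_iff_nhdsWithin_neBot.mp hcl
    have hGGcont : ContinuousAt (GG S) z := by
      have hlip : LipschitzWith ⟨sigmaS S, sigma_nonneg hScomp hS0⟩ (suppFn S) := by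
        apply LipschitzWith.of_dist_le_mul
        intro ξ η
        rw [Real.dist_eq, abs_sub_le_iff]
        have hd : (0:ℝ) ≤ dist ξ η := dist_nonneg
        have key : ∀ a b : Fin n → ℝ, ∀ i, a i ≤ b i + dist a b := by
          intro a b i
          have h1 := dist_le_pi_dist a b i
          rw [Real.dist_eq] at h1
          have := (abs_le.mp h1).2
          linarith
        have h1 : suppFn S ξ ≤ suppFn S η + sigmaS S * dist ξ η :=
          suppFn_lip hSsub hScomp hS0 hd (fun i => key ξ η i)
        have h2 : suppFn S η ≤ suppFn S ξ + sigmaS S * dist ξ η := by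
          have := suppFn_lip hSsub hScomp hS0 (d := dist η ξ) dist_nonneg (fun i => key η ξ i)
          rwa [dist_comm η ξ] at this
        constructor <;> [skip; skip] <;> change _ ≤ sigmaS S * dist ξ η <;> linarith
      have hLg : Continuous fun z : Fin n → ℂ => (fun i => Real.log (max (‖z i‖) 1)) := by
        rw [continuous_pi_iff]
        intro i
        apply Real.continuousOn_log.comp_continuous
        · exact ((continuous_apply i).norm).max continuous_const
        · intro w
          simp only [Set.mem_compl_iff, Set.mem_singleton_iff]
          have : (0:ℝ) < max (‖w i‖) 1 := lt_of_lt_of_le one_pos (le_max_right _ _)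
          exact ne_of_gt this
      exact (hlip.continuous.comp hLg).continuousAt
    have htd : Filter.Tendsto (GG S) (𝓝[torusComp n] z) (𝓝 (GG S z)) :=
      hGGcont.continuousWithinAt.tendsto
    have hcongr : Filter.limsup (fun w => suppFn S (fun i => Real.log (‖w i‖)))
        (𝓝[torusComp n] z) = Filter.limsup (GG S) (𝓝[torusComp n] z) := by
      apply Filter.limsup_congr
      filter_upwards with w using hagree w
    rw [hcongr, htd.limsup_eq]

lemma GG_nonneg (hScomp : IsCompact S) (hS0 : (0 : Fin n → ℝ) ∈ S) (z : Fin n → ℂ) :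
    0 ≤ GG S z := suppFn_nonneg hScomp hS0 _

lemma eucNorm_smul (t : ℂ) (v : Fin n → ℂ) : eucNorm (t • v) = ‖t‖ * eucNorm v := by
  unfold eucNorm
  have : ∑ i, ‖(t • v) i‖ ^ 2 = ‖t‖ ^ 2 * ∑ i, ‖v i‖ ^ 2 := by
    rw [Finset.mul_sum]
    apply Finset.sum_congr rfl
    intro i _
    simp [Pi.smul_apply, norm_mul, mul_pow]
  rw [this, Real.sqrt_mul (sq_nonneg _), Real.sqrt_sq_eq_abs, abs_of_nonneg (norm_nonneg t)]

lemma rmu_mul_le {μ : (Fin n → ℂ) → ℝ} (hμ : IsDistFn μ) (v : Fin n → ℂ) :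
    rMu μ * eucNorm v ≤ μ v := by
  obtain ⟨hc, hnn, hzero, hhom⟩ := hμ
  by_cases hv : eucNorm v = 0
  · rw [hv, mul_zero]; exact hnn v
  · have ht0 : 0 < eucNorm v := lt_of_le_of_ne (Real.sqrt_nonneg _) (Ne.symm hv)
    set t := eucNorm v
    set vh := ((t : ℂ)⁻¹) • v with hvh
    have hunit : eucNorm vh = 1 := by
      rw [hvh, eucNorm_smul]
      rw [norm_inv, Complex.norm_real, Real.norm_eq_abs, abs_of_pos ht0]
      field_simp; rfl
    have hmem : μ vh ∈ μ '' {z | eucNorm z = 1} := ⟨vh, hunit, rfl⟩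
    have hbdd : BddBelow (μ '' {z | eucNorm z = 1}) :=
      ⟨0, by rintro y ⟨x, _, rfl⟩; exact hnn x⟩
    have h1 : rMu μ ≤ μ vh := csInf_le hbdd hmem
    have h2 : μ v = t * μ vh := by
      have hv' : v = (t : ℂ) • vh := by
        rw [hvh, smul_smul, mul_inv_cancel₀ (by exact_mod_cast ne_of_gt ht0), one_smul]
      rw [hv', hhom, Complex.norm_real, Real.norm_eq_abs, abs_of_pos ht0]
    nlinarith [hnn vh]

lemma expE_coe (r : ℝ) : expE (r : EReal) = ENNReal.ofReal (Real.exp r) := by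
  simp [expE]

lemma expE_mono : Monotone expE := by
  intro x y h
  unfold expE
  rcases eq_or_ne x ⊥ with hx | hx
  · simp [hx]
  rcases eq_or_ne y ⊤ with hy | hy
  · simp only [hy, if_neg (by simp : (⊤:EReal) ≠ ⊥), if_pos rfl]
    exact le_top
  have hx' : x ≠ ⊤ := ne_top_of_le_ne_top hy h
  have hy' : y ≠ ⊥ := fun hb => hx (le_bot_iff.mp (hb ▸ h))
  simp only [hx, hy, hx', hy', if_false]
  exact ENNReal.ofReal_le_ofReal (Real.exp_le_exp.mpr (EReal.toReal_le_toReal h hx hy))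

lemma neg_elog_le (r : ℝ) (I : ℝ≥0∞) (h : ENNReal.ofReal (Real.exp (-r)) ≤ I) :
    -elog I ≤ (r : EReal) := by
  rcases eq_or_ne I ⊤ with hI | hI
  · simp [elog, hI]
  have hI0 : I ≠ 0 := by
    intro h0
    rw [h0, nonpos_iff_eq_zero] at h
    exact absurd h (by simp [Real.exp_pos])
  rw [elog, if_neg hI0, if_neg hI]
  rw [← EReal.coe_neg, EReal.coe_le_coe_iff]
  have h1 : Real.exp (-r) ≤ I.toReal := by
    have := ENNReal.toReal_mono hI h
    rwa [ENNReal.toReal_ofReal (Real.exp_nonneg _)] at this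
  have h2 : -r ≤ Real.log I.toReal := by
    have := Real.log_le_log (Real.exp_pos _) h1
    rwa [Real.log_exp] at this
  linarith

lemma realKey (a b t σ c d : ℝ) (ha : 0 ≤ a) (hσ : 0 ≤ σ) (ht : 0 ≤ t)
    (hab : b ≤ a + σ * t) (hμd : σ * Real.exp (-c) * t ≤ d) :
    Real.exp (-(a + c)) ≤ Real.exp (-(b + c)) + d := by
  have h1 : Real.exp (-(a + σ * t)) ≤ Real.exp (-b) := Real.exp_le_exp.mpr (by linarith)
  have h2 : Real.exp (-(a + σ*t)) = Real.exp (-a) * Real.exp (-(σ*t)) := by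
    rw [← Real.exp_add]; ring_nf
  have h3 : 1 - σ * t ≤ Real.exp (-(σ*t)) := by
    have := Real.add_one_le_exp (-(σ*t)); linarith
  have h4 : Real.exp (-a) ≤ 1 := Real.exp_le_one_iff.mpr (by linarith)
  have h5 : Real.exp (-a) - Real.exp (-b) ≤ σ * t := by
    have k1 : Real.exp (-a) * (1 - σ*t) ≤ Real.exp (-a) * Real.exp (-(σ*t)) :=
      mul_le_mul_of_nonneg_left h3 (Real.exp_pos (-a)).le
    have k2 : 0 ≤ (1 - Real.exp (-a)) * (σ*t) :=
      mul_nonneg (by linarith) (mul_nonneg hσ ht)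
    nlinarith [k1, k2]
  have h6 : Real.exp (-(a+c)) = Real.exp (-a) * Real.exp (-c) := by
    rw [← Real.exp_add]; ring_nf
  have h7 : Real.exp (-(b+c)) = Real.exp (-b) * Real.exp (-c) := by
    rw [← Real.exp_add]; ring_nf
  nlinarith [Real.exp_pos (-c)]

end Aux

/-- For a compact convex lower set `0 ∈ S ⊆ ℝⁿ₊`, a distance function `μ`,
`u ≤ H_S + c_u` and `δ ∈ (0, σ_S⁻¹ e^{c_u} r_μ)`, one has `R^a_{μ,δ} u ≤ H_S + c_u` on `ℂⁿ`. -/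
theorem statement14 {n : ℕ} (S : Set (Fin n → ℝ))
    (hSsub : S ⊆ posOrthant n) (hSconv : Convex ℝ S) (hScomp : IsCompact S)
    (hS0 : (0 : Fin n → ℝ) ∈ S) (hSlow : IsLowerIn S)
    (μ : (Fin n → ℂ) → ℝ) (hμ : IsDistFn μ)
    (u : (Fin n → ℂ) → EReal) (c : ℝ) (hc : ∀ z, u z ≤ ((HS S z + c : ℝ) : EReal))
    (δ : ℝ) (hδ0 : 0 < δ) (hδ1 : δ < (sigmaS S)⁻¹ * Real.exp c * rMu μ) :
    ∀ z : Fin n → ℂ, RaGen μ δ u z ≤ ((HS S z + c : ℝ) : EReal) := by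
  -- Preliminaries
  have hSsub' : ∀ x ∈ S, ∀ i, 0 ≤ x i := fun x hx i => hSsub hx i
  have hσ0 : 0 ≤ sigmaS S := sigma_nonneg hScomp hS0
  obtain ⟨hμcont, hμnn, hμ0, hμhom⟩ := hμ
  -- positivity facts
  have hprod : 0 < (sigmaS S)⁻¹ * Real.exp c * rMu μ := lt_trans hδ0 hδ1
  have hσinvnn : 0 ≤ (sigmaS S)⁻¹ := inv_nonneg.mpr hσ0
  have hσinv : 0 < (sigmaS S)⁻¹ := by
    rcases hσinvnn.lt_or_eq with h | h
    · exact h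
    · exfalso; rw [← h] at hprod; simp at hprod
  have hσpos : 0 < sigmaS S := by
    rcases lt_trichotomy (sigmaS S) 0 with h | h | h
    · linarith
    · rw [h] at hσinv; simp at hσinv
    · exact h
  have hrpos : 0 < rMu μ := by
    by_contra h
    push_neg at h
    nlinarith [mul_pos hσinv (Real.exp_pos c)]
  have hkey2 : δ * sigmaS S * Real.exp (-c) < rMu μ := by
    have h1 : δ * sigmaS S * Real.exp (-c) < (sigmaS S)⁻¹ * Real.exp c * rMu μ * sigmaS S * Real.exp (-c) := by
      apply mul_lt_mul_of_pos_right
      · exact mul_lt_mul_of_pos_right hδ1 hσpos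
      · exact Real.exp_pos _
    have he : Real.exp c * Real.exp (-c) = 1 := by rw [← Real.exp_add]; simp
    have h2 : (sigmaS S)⁻¹ * Real.exp c * rMu μ * sigmaS S * Real.exp (-c) = rMu μ := by
      calc (sigmaS S)⁻¹ * Real.exp c * rMu μ * sigmaS S * Real.exp (-c)
          = ((sigmaS S)⁻¹ * sigmaS S) * (Real.exp c * Real.exp (-c)) * rMu μ := by ring
        _ = rMu μ := by rw [inv_mul_cancel₀ (ne_of_gt hσpos), he]; ring
    linarith
  intro z
  rw [HS_eq_GG hSsub' hScomp hS0 hSlow]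
  -- the key pointwise estimate
  have hKey : ∀ w : Fin n → ℂ, ENNReal.ofReal (Real.exp (-(GG S z + c))) ≤
      expE (-u w) + ENNReal.ofReal (δ⁻¹ * μ (z - w)) := by
    intro w
    have h1 : u w ≤ ((GG S w + c : ℝ) : EReal) := by
      rw [← HS_eq_GG hSsub' hScomp hS0 hSlow]; exact hc w
    have h2 : ((-(GG S w + c) : ℝ) : EReal) ≤ -u w := by
      rw [EReal.coe_neg]
      exact EReal.neg_le_neg_iff.mpr h1
    have h3 : ENNReal.ofReal (Real.exp (-(GG S w + c))) ≤ expE (-u w) := by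
      rw [← expE_coe]
      exact expE_mono h2
    -- real-valued estimate
    set t := eucNorm (z - w) with htdef
    have ht0 : 0 ≤ t := Real.sqrt_nonneg _
    have hab : GG S w ≤ GG S z + sigmaS S * t := by
      apply suppFn_lip hSsub' hScomp hS0 ht0
      intro i
      have := GG_lipKey (z := w) (w := z) i
      have hsymm : eucNorm (w - z) = t := by
        have : w - z = (-1 : ℂ) • (z - w) := by
          funext j; simp [Pi.smul_apply]
        rw [htdef, this, eucNorm_smul]
        simp
      rwa [hsymm] at this
    have hμt : sigmaS S * Real.exp (-c) * t ≤ δ⁻¹ * μ (z - w) := by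
      have h4 : rMu μ * t ≤ μ (z - w) := rmu_mul_le ⟨hμcont, hμnn, hμ0, hμhom⟩ (z - w)
      have h5 : δ * (sigmaS S * Real.exp (-c) * t) ≤ μ (z - w) := by
        nlinarith
      calc sigmaS S * Real.exp (-c) * t = δ⁻¹ * (δ * (sigmaS S * Real.exp (-c) * t)) :=
            (inv_mul_cancel_left₀ hδ0.ne' _).symm
        _ ≤ δ⁻¹ * μ (z - w) :=
            mul_le_mul_of_nonneg_left h5 (inv_nonneg.mpr hδ0.le)
    have hreal : Real.exp (-(GG S z + c)) ≤ Real.exp (-(GG S w + c)) + δ⁻¹ * μ (z - w) :=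
      realKey (GG S z) (GG S w) t (sigmaS S) c (δ⁻¹ * μ (z - w))
        (GG_nonneg hScomp hS0 z) hσ0 ht0 hab hμt
    calc ENNReal.ofReal (Real.exp (-(GG S z + c)))
        ≤ ENNReal.ofReal (Real.exp (-(GG S w + c)) + δ⁻¹ * μ (z - w)) :=
          ENNReal.ofReal_le_ofReal hreal
      _ = ENNReal.ofReal (Real.exp (-(GG S w + c))) + ENNReal.ofReal (δ⁻¹ * μ (z - w)) :=
          ENNReal.ofReal_add (Real.exp_nonneg _) (mul_nonneg (inv_nonneg.mpr hδ0.le) (hμnn _))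
      _ ≤ expE (-u w) + ENNReal.ofReal (δ⁻¹ * μ (z - w)) := add_le_add h3 le_rfl
  have hI : ENNReal.ofReal (Real.exp (-(GG S z + c))) ≤
      ⨅ w : Fin n → ℂ, expE (-u w) + ENNReal.ofReal (δ⁻¹ * μ (z - w)) :=
    le_iInf hKey
  exact neg_elog_le (GG S z + c) _ hI


end
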